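/- Let the transition rates of L take values in {0,1} off the diagonal and suppose the underlying graph G = (X,E) is an unweighted d-regular (R)-Ricci-flat graph. Then the function F : [0,∞) → [0,∞), F(r) = (d/2)·ν_{2,5}(−r/d), is a CD-function and L satisfies CD_Υ(2,F). -/

import Mathlib

open Real Filter MeasureTheory Set

/-- `Υ(r) = e^r - r - 1`. -/
noncomputable def Ups (r : ℝ) : ℝ := Real.exp r - r - 1

/-- `M₁(x) = ∑_{y ≠ x} k(x,y)`. -/
noncomputable def M1fn {X : Type*} (k : X → X → ℝ) (x : X) : ℝ :=
  ∑' y : {y : X // y ≠ x}, k x y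

/-- The Markov generator `L f(x) = ∑_y k(x,y)(f(y) - f(x))`. -/
noncomputable def genOp {X : Type*} (k : X → X → ℝ) (f : X → ℝ) (x : X) : ℝ :=
  ∑' y, k x y * (f y - f x)

/-- `Ψ_Υ(f)(x) = ∑_y k(x,y) Υ(f(y) - f(x))`. -/
noncomputable def psiUps {X : Type*} (k : X → X → ℝ) (f : X → ℝ) (x : X) : ℝ :=
  ∑' y, k x y * Ups (f y - f x)

/-- `B_{Υ'}(f,g)(x) = ∑_y k(x,y) Υ'(f(y)-f(x)) (g(y)-g(x))`. -/
noncomputable def bUps {X : Type*} (k : X → X → ℝ) (f g : X → ℝ) (x : X) : ℝ :=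
  ∑' y, k x y * (Real.exp (f y - f x) - 1) * (g y - g x)

/-- `Ψ_{2,Υ}(f) = (1/2)(L Ψ_Υ(f) - B_{Υ'}(f, L f))`. -/
noncomputable def psi2Ups {X : Type*} (k : X → X → ℝ) (f : X → ℝ) (x : X) : ℝ :=
  (1/2) * (genOp k (psiUps k f) x - bUps k f (genOp k f) x)

/-- Boundedness of a real-valued function on the state space. -/
def BddFun {X : Type*} (f : X → ℝ) : Prop := ∃ B : ℝ, ∀ x, |f x| ≤ B

/-- The standing assumptions on the transition rates: nonnegative off-diagonal rates,
`M₁(x) < ∞` (summability), `k(x,x) = -M₁(x)`, and `M₂(x) < ∞`. -/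
def KernelSetting {X : Type*} (k : X → X → ℝ) : Prop :=
  (∀ x y, x ≠ y → 0 ≤ k x y) ∧
  (∀ x : X, Summable fun y : {y : X // y ≠ x} => k x y) ∧
  (∀ x : X, k x x = -M1fn k x) ∧
  (∀ x : X, Summable fun y : {y : X // y ≠ x} => k x y * M1fn k y)

/-- A CD-function: continuous and nonnegative on `[0,∞)` with `F(0) = 0`, `F(r)/r`
strictly increasing on `(0,∞)` and `1/F` integrable at `∞`. -/
def IsCDFunction (F : ℝ → ℝ) : Prop :=
  ContinuousOn F (Ici 0) ∧ F 0 = 0 ∧ (∀ r : ℝ, 0 ≤ r → 0 ≤ F r) ∧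
  StrictMonoOn (fun r => F r / r) (Ioi 0) ∧
  ∃ c : ℝ, 0 < c ∧ IntegrableOn (fun r => 1 / F r) (Ioi c)

/-- The trivial extension `F₀` of `F : [0,∞) → [0,∞)` by `0` on `(-∞,0)`. -/
noncomputable def trivExt (F : ℝ → ℝ) : ℝ → ℝ := fun r => if 0 ≤ r then F r else 0

/-- The condition `CD_Υ(κ,F)` at a point `x`. -/
def CDUpsAt {X : Type*} (k : X → X → ℝ) (κ : ℝ) (F : ℝ → ℝ) (x : X) : Prop :=
  ∀ f : X → ℝ, BddFun f →
    κ * psiUps k f x + trivExt F (-genOp k f x) ≤ psi2Ups k f x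

/-- The condition `CD_Υ(κ,F)` (at every point). -/
def CDUps {X : Type*} (k : X → X → ℝ) (κ : ℝ) (F : ℝ → ℝ) : Prop :=
  ∀ x : X, CDUpsAt k κ F x

/-- `ν_{c,d}(r) = c Υ'(r) r + Υ(-r) - d Υ(r)`. -/
noncomputable def nuFn (c d r : ℝ) : ℝ :=
  c * (Real.exp r - 1) * r + Ups (-r) - d * Ups r

noncomputable def nu1 (r : ℝ) : ℝ := (2*r-3)*Real.exp r - Real.exp (-r) + 4
noncomputable def nu2 (r : ℝ) : ℝ := (2*r-1)*Real.exp r + Real.exp (-r)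

lemma nuFn_eq (r : ℝ) :
    nuFn 2 5 r = 2*r*Real.exp r - 5*Real.exp r + Real.exp (-r) + 4*r + 4 := by
  unfold nuFn Ups; ring

lemma ups_tangent (u v : ℝ) : Ups v + (Real.exp v - 1) * (u - v) ≤ Ups u := by
  unfold Ups
  have h : 1 + (u - v) ≤ Real.exp (u - v) := by
    have := Real.add_one_le_exp (u - v); linarith
  have h2 : Real.exp v * Real.exp (u - v) = Real.exp u := by
    rw [← Real.exp_add]; ring_nf
  nlinarith [Real.exp_pos v]

lemma hasDerivAt_nu (r : ℝ) : HasDerivAt (nuFn 2 5) (nu1 r) r := by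
  have h : HasDerivAt (fun r : ℝ => 2*r*Real.exp r - 5*Real.exp r + Real.exp (-r) + 4*r + 4)
      (nu1 r) r := by
    have he : HasDerivAt Real.exp (Real.exp r) r := Real.hasDerivAt_exp r
    have hne : HasDerivAt (fun r : ℝ => Real.exp (-r)) (-Real.exp (-r)) r := by
      simpa [Function.comp_def] using (Real.hasDerivAt_exp (-r)).comp r (hasDerivAt_neg r)
    have h1 : HasDerivAt (fun r : ℝ => 2*r*Real.exp r)
        (2*Real.exp r + 2*r*Real.exp r) r := by
      exact (((hasDerivAt_id r).const_mul (2:ℝ)).mul he).congr_deriv (by simp only [id]; ring)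
    have := ((((h1.sub (he.const_mul (5:ℝ))).add hne).add
      ((hasDerivAt_id r).const_mul (4:ℝ))).add_const (4:ℝ))
    refine this.congr_deriv ?_
    unfold nu1; ring
  exact h.congr_deriv rfl |>.congr_of_eventuallyEq (by filter_upwards with t; rw [nuFn_eq])

lemma hasDerivAt_nu1 (r : ℝ) : HasDerivAt nu1 (nu2 r) r := by
  have he : HasDerivAt Real.exp (Real.exp r) r := Real.hasDerivAt_exp r
  have hne : HasDerivAt (fun r : ℝ => Real.exp (-r)) (-Real.exp (-r)) r := by
    simpa [Function.comp_def] using (Real.hasDerivAt_exp (-r)).comp r (hasDerivAt_neg r)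
  have h1 : HasDerivAt (fun r : ℝ => (2*r-3)*Real.exp r)
      (2*Real.exp r + (2*r-3)*Real.exp r) r := by
    have hl : HasDerivAt (fun r : ℝ => 2*r-3) 2 r := by
      simpa using ((hasDerivAt_id r).const_mul (2:ℝ)).sub_const (3:ℝ)
    exact hl.mul he
  have := (h1.sub hne).add_const (4:ℝ)
  refine this.congr_deriv ?_
  unfold nu2; ring

lemma nu2_nonneg (r : ℝ) : 0 ≤ nu2 r := by
  unfold nu2
  have h : 1 + (-(2*r)) ≤ Real.exp (-(2*r)) := by
    have := Real.add_one_le_exp (-(2*r)); linarith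
  have ea : Real.exp (-(2*r)) * (Real.exp r * Real.exp r) = 1 := by
    rw [← Real.exp_add, ← Real.exp_add]; ring_nf; exact Real.exp_zero
  have eb : Real.exp (-r) * Real.exp r = 1 := by
    rw [← Real.exp_add]; ring_nf; exact Real.exp_zero
  have key : (1 - 2*r) * (Real.exp r * Real.exp r) ≤ 1 := by
    have h2 := mul_le_mul_of_nonneg_right (by linarith : (1:ℝ) - 2*r ≤ Real.exp (-(2*r)))
      (mul_pos (Real.exp_pos r) (Real.exp_pos r)).le
    linarith [h2.trans_eq ea]
  nlinarith [key, eb, Real.exp_pos r, Real.exp_pos (-r)]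

lemma nu2_pos_of_neg {r : ℝ} (hr : r < 0) : 0 < nu2 r := by
  unfold nu2
  have h : -(2*r) + 1 < Real.exp (-(2*r)) := Real.add_one_lt_exp (by intro h0; nlinarith)
  have ea : Real.exp (-(2*r)) * (Real.exp r * Real.exp r) = 1 := by
    rw [← Real.exp_add, ← Real.exp_add]; ring_nf; exact Real.exp_zero
  have eb : Real.exp (-r) * Real.exp r = 1 := by
    rw [← Real.exp_add]; ring_nf; exact Real.exp_zero
  have key : (1 - 2*r) * (Real.exp r * Real.exp r) < 1 := by
    have h2 := mul_lt_mul_of_pos_right (by linarith : (1:ℝ) - 2*r < Real.exp (-(2*r)))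
      (mul_pos (Real.exp_pos r) (Real.exp_pos r))
    linarith [h2.trans_eq ea]
  nlinarith [key, eb, Real.exp_pos r, Real.exp_pos (-r)]

lemma nu1_monotone : Monotone nu1 := by
  have hdiff : ∀ x, HasDerivAt nu1 (nu2 x) x := hasDerivAt_nu1
  exact monotone_of_deriv_nonneg (fun x => (hdiff x).differentiableAt)
    (fun x => by rw [(hdiff x).deriv]; exact nu2_nonneg x)

lemma nu_tangent (u v : ℝ) : nuFn 2 5 v + nu1 v * (u - v) ≤ nuFn 2 5 u := by
  set G : ℝ → ℝ := fun t => nuFn 2 5 t - nu1 v * t with hG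
  have hdG : ∀ t, HasDerivAt G (nu1 t - nu1 v) t := by
    intro t
    exact (hasDerivAt_nu t).sub (((hasDerivAt_id t).const_mul (nu1 v)).congr_deriv
      (by simp))
  have key : G v ≤ G u := by
    rcases le_total v u with hvu | huv
    · have hm : MonotoneOn G (Icc v u) := by
        apply monotoneOn_of_deriv_nonneg (convex_Icc v u)
          (fun t _ => (hdG t).continuousAt.continuousWithinAt)
          (fun t ht => ((hdG t).differentiableAt).differentiableWithinAt)
        intro t ht
        rw [(hdG t).deriv]
        have : v ≤ t := by
          rw [interior_Icc] at ht; exact ht.1.le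
        linarith [nu1_monotone this]
      exact hm ⟨le_refl v, hvu⟩ ⟨hvu, le_refl u⟩ hvu
    · have hm : AntitoneOn G (Icc u v) := by
        apply antitoneOn_of_deriv_nonpos (convex_Icc u v)
          (fun t _ => (hdG t).continuousAt.continuousWithinAt)
          (fun t ht => ((hdG t).differentiableAt).differentiableWithinAt)
        intro t ht
        rw [(hdG t).deriv]
        have : t ≤ v := by
          rw [interior_Icc] at ht; exact ht.2.le
        linarith [nu1_monotone this]
      exact hm ⟨le_refl u, huv⟩ ⟨huv, le_refl v⟩ huv
  simp only [hG] at key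
  nlinarith [key]

lemma nu_zero : nuFn 2 5 0 = 0 := by rw [nuFn_eq]; simp; norm_num

lemma nu1_zero : nu1 0 = 0 := by unfold nu1; simp; norm_num

lemma nu_nonneg (r : ℝ) : 0 ≤ nuFn 2 5 r := by
  have := nu_tangent r 0
  rw [nu_zero, nu1_zero] at this
  linarith

lemma nu_continuous : Continuous (nuFn 2 5) := by
  unfold nuFn Ups; continuity

lemma nu_strictConvexOn : StrictConvexOn ℝ (Iic (0:ℝ)) (nuFn 2 5) := by
  apply strictConvexOn_of_deriv2_pos (convex_Iic 0) nu_continuous.continuousOn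
  intro x hx
  rw [interior_Iic] at hx
  have h1 : deriv (nuFn 2 5) = nu1 := funext fun t => (hasDerivAt_nu t).deriv
  have h2 : deriv nu1 = nu2 := funext fun t => (hasDerivAt_nu1 t).deriv
  have : deriv^[2] (nuFn 2 5) = nu2 := by
    show deriv (deriv (nuFn 2 5)) = nu2
    rw [h1, h2]
  rw [this]
  exact nu2_pos_of_neg hx

lemma nu_jensen {d : ℕ} (hd : 1 ≤ d) (a : Fin d → ℝ) :
    (d : ℝ) * nuFn 2 5 ((∑ i, a i) / d) ≤ ∑ i, nuFn 2 5 (a i) := by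
  have hd0 : (0:ℝ) < d := by exact_mod_cast hd
  set v : ℝ := (∑ i, a i) / d with hv
  have ht : ∀ i, nuFn 2 5 v + nu1 v * (a i - v) ≤ nuFn 2 5 (a i) := fun i => nu_tangent (a i) v
  have hsum := Finset.sum_le_sum (fun i (_ : i ∈ Finset.univ) => ht i)
  have hA : ∑ i, (nuFn 2 5 v + nu1 v * (a i - v)) = (d:ℝ) * nuFn 2 5 v := by
    rw [Finset.sum_add_distrib, ← Finset.mul_sum, Finset.sum_sub_distrib]
    simp only [Finset.sum_const, Finset.card_univ, Fintype.card_fin, nsmul_eq_mul]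
    have : ∑ i, a i - (d:ℝ) * v = 0 := by
      rw [hv]; field_simp; ring
    rw [this]; ring
  linarith [hA ▸ hsum]

-- strict slope inequality: for 0 < s1 < s2, ν(-s1)/s1 < ν(-s2)/s2
lemma nu_slope {s1 s2 : ℝ} (h1 : 0 < s1) (h12 : s1 < s2) :
    nuFn 2 5 (-s1) / s1 < nuFn 2 5 (-s2) / s2 := by
  have h2 : 0 < s2 := h1.trans h12
  have hmem2 : -s2 ∈ Iic (0:ℝ) := by simp; linarith
  have hmem0 : (0:ℝ) ∈ Iic (0:ℝ) := by simp
  have hne : -s2 ≠ (0:ℝ) := by intro h; nlinarith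
  have hl : 0 < s1 / s2 := by positivity
  have hr : 0 < 1 - s1 / s2 := by
    have : s1 / s2 < 1 := (div_lt_one h2).mpr h12
    linarith
  have := nu_strictConvexOn.2 hmem2 hmem0 hne hl hr (by ring)
  rw [nu_zero] at this
  have heq : (s1 / s2) • (-s2) + (1 - s1 / s2) • (0:ℝ) = -s1 := by
    simp only [smul_eq_mul, mul_zero, add_zero]; field_simp
  rw [heq] at this
  -- this : nuFn 2 5 (-s1) < s1 / s2 * nuFn 2 5 (-s2) + (1 - s1/s2) * 0
  have h3 : nuFn 2 5 (-s1) < s1 / s2 * nuFn 2 5 (-s2) := by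
    simpa using this
  rw [div_lt_div_iff₀ h1 h2]
  calc nuFn 2 5 (-s1) * s2 < (s1 / s2 * nuFn 2 5 (-s2)) * s2 := by
        exact mul_lt_mul_of_pos_right h3 h2
    _ = nuFn 2 5 (-s2) * s1 := by field_simp

lemma nu_growth {s : ℝ} (hs : 45 ≤ s) : Real.exp s / 2 ≤ nuFn 2 5 (-s) := by
  have h0 : (0:ℝ) < s := by linarith
  have he1 : Real.exp (-s) ≤ 1 := Real.exp_le_one_iff.mpr (by linarith)
  have he0 : 0 < Real.exp (-s) := Real.exp_pos _
  have hq : (1 + s/2)^2 ≤ Real.exp s := by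
    have h := Real.add_one_le_exp (s/2)
    have hnn : (0:ℝ) ≤ s/2 + 1 := by linarith
    have := mul_le_mul h h (by linarith) (Real.exp_pos _).le
    calc (1 + s/2)^2 = (s/2+1) * (s/2+1) := by ring
      _ ≤ Real.exp (s/2) * Real.exp (s/2) := this
      _ = Real.exp s := by rw [← Real.exp_add]; ring_nf
  rw [nuFn_eq, neg_neg]
  have hb : 2*(-s)*Real.exp (-s) + (-5)*Real.exp (-s) ≥ -(2*s + 5) := by nlinarith
  have h12 : 12*s + 2 ≤ Real.exp s := by nlinarith [hq]
  nlinarith [h12, hb]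

lemma cd_fun_part {d : ℕ} (hd : 1 ≤ d) :
    IsCDFunction (fun r => (d : ℝ) / 2 * nuFn 2 5 (-(r / d))) := by
  have hd0 : (0:ℝ) < d := by exact_mod_cast hd
  refine ⟨?_, ?_, ?_, ?_, ?_⟩
  · exact (Continuous.continuousOn (continuous_const.mul (nu_continuous.comp (continuous_id.div_const _).neg) : Continuous fun r : ℝ =>
      (d : ℝ) / 2 * nuFn 2 5 (-(r / d))))
  · simp [nu_zero]
  · intro r _; exact mul_nonneg (by positivity) (nu_nonneg _)
  · intro r1 h1 r2 h2 h12
    simp only [mem_Ioi] at h1 h2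
    have hs : nuFn 2 5 (-(r1/d)) / (r1/d) < nuFn 2 5 (-(r2/d)) / (r2/d) :=
      nu_slope (by positivity) (by gcongr)
    show (d:ℝ)/2 * nuFn 2 5 (-(r1/d)) / r1 < (d:ℝ)/2 * nuFn 2 5 (-(r2/d)) / r2
    have e1 : (d:ℝ)/2 * nuFn 2 5 (-(r1/d)) / r1 = nuFn 2 5 (-(r1/d)) / (r1/d) / 2 := by
      field_simp
    have e2 : (d:ℝ)/2 * nuFn 2 5 (-(r2/d)) / r2 = nuFn 2 5 (-(r2/d)) / (r2/d) / 2 := by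
      field_simp
    rw [e1, e2]
    linarith
  · refine ⟨45 * d, by positivity, ?_⟩
    have hint : IntegrableOn (fun r : ℝ => (4/(d:ℝ)) * Real.exp (-(1/d) * r)) (Ioi (45*d)) :=
      (exp_neg_integrableOn_Ioi (45*d) (by positivity)).const_mul _
    apply Integrable.mono' hint
    · have hc : Continuous fun r : ℝ => (d:ℝ)/2 * nuFn 2 5 (-(r/(d:ℝ))) :=
        continuous_const.mul (nu_continuous.comp (continuous_id.div_const _).neg)
      simp only [one_div]
      exact hc.measurable.inv.aestronglyMeasurable
    · rw [ae_restrict_iff' measurableSet_Ioi]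
      filter_upwards with r hr
      simp only [mem_Ioi] at hr
      have hs : 45 ≤ r / d := by
        rw [le_div_iff₀ hd0]; linarith
      have hF : (d:ℝ)/4 * Real.exp (r/d) ≤ (d:ℝ)/2 * nuFn 2 5 (-(r/d)) := by
        have := nu_growth hs
        nlinarith
      have hFpos : 0 < (d:ℝ)/2 * nuFn 2 5 (-(r/d)) :=
        lt_of_lt_of_le (by positivity) hF
      rw [Real.norm_eq_abs, abs_of_pos (by positivity)]
      rw [div_le_iff₀ hFpos]
      have key : Real.exp (-(1/d) * r) * Real.exp (r/d) = 1 := by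
        rw [← Real.exp_add]; field_simp; norm_num
      have h4 : (4/(d:ℝ))*Real.exp (-(1/d)*r) * ((d:ℝ)/4 * Real.exp (r/d)) = 1 := by
        calc (4/(d:ℝ))*Real.exp (-(1/d)*r) * ((d:ℝ)/4 * Real.exp (r/d))
            = (Real.exp (-(1/d)*r) * Real.exp (r/d)) * ((4/(d:ℝ)) * ((d:ℝ)/4)) := by ring
          _ = 1 := by rw [key]; field_simp
      calc (1:ℝ) = (4/(d:ℝ)) * Real.exp (-(1/(d:ℝ))*r) * ((d:ℝ)/4 * Real.exp (r/d)) := h4.symm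
        _ ≤ (4/(d:ℝ)) * Real.exp (-(1/(d:ℝ))*r) * ((d:ℝ)/2 * nuFn 2 5 (-(r/d))) :=
            mul_le_mul_of_nonneg_left hF (by positivity)

lemma key_sum {X : Type*} [Countable X] (k : X → X → ℝ) (d : ℕ)
    (h01 : ∀ x y : X, x ≠ y → k x y = 0 ∨ k x y = 1)
    (hsum : ∀ x : X, Summable fun y : {y : X // y ≠ x} => k x y)
    (hreg : ∀ x : X, M1fn k x = (d : ℝ))
    (x : X) (m : Fin d → X) (hm1 : ∀ i, m i ≠ x ∧ k x (m i) = 1)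
    (hm2 : Function.Injective m) (h : X → ℝ) (hhx : h x = 0) :
    ∑' y, k x y * h y = ∑ i, h (m i) := by
  classical
  have hnn : ∀ z : {y : X // y ≠ x}, 0 ≤ k x z.1 := by
    intro z
    rcases h01 x z.1 (Ne.symm z.2) with h | h <;> rw [h] <;> norm_num
  -- the subtype map
  set m' : Fin d → {y : X // y ≠ x} := fun i => ⟨m i, (hm1 i).1⟩ with hm'
  have hm'2 : Function.Injective m' := by
    intro i j hij
    apply hm2
    exact congrArg Subtype.val hij
  set T : Finset {y : X // y ≠ x} := Finset.image m' Finset.univ with hT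
  have hTsum : ∑ z ∈ T, k x z.1 = (d : ℝ) := by
    rw [hT, Finset.sum_image (fun i _ j _ hij => hm'2 hij)]
    simp only [hm']
    rw [Finset.sum_congr rfl (fun i _ => (hm1 i).2)]
    simp
  have hzero : ∀ y : X, y ≠ x → (∀ i, m i ≠ y) → k x y = 0 := by
    intro y hy hmy
    set z : {y : X // y ≠ x} := ⟨y, hy⟩ with hz
    have hzT : z ∉ T := by
      rw [hT]
      simp only [Finset.mem_image, Finset.mem_univ, true_and, not_exists]
      intro i hi
      exact hmy i (congrArg Subtype.val hi)
    have hle : ∑ w ∈ insert z T, k x w.1 ≤ ∑' w : {y : X // y ≠ x}, k x w.1 :=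
      (hsum x).sum_le_tsum _ (fun w _ => hnn w)
    rw [Finset.sum_insert hzT, hTsum] at hle
    have : ∑' w : {y : X // y ≠ x}, k x w.1 = (d : ℝ) := hreg x
    rw [this] at hle
    have hk0 : k x y ≤ 0 := by simpa [hz] using hle
    rcases h01 x y (Ne.symm hy) with h0 | h1
    · exact h0
    · linarith [h1 ▸ hk0]
  have hmain : ∑' y, k x y * h y = ∑ y ∈ Finset.image m Finset.univ, k x y * h y := by
    apply tsum_eq_sum
    intro y hy
    by_cases hyx : y = x
    · rw [hyx, hhx, mul_zero]
    · rw [hzero y hyx, zero_mul]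
      intro i hi
      exact hy (Finset.mem_image.mpr ⟨i, Finset.mem_univ i, hi⟩)
  rw [hmain, Finset.sum_image (fun i _ j _ hij => hm2 hij)]
  apply Finset.sum_congr rfl
  intro i _
  rw [(hm1 i).2, one_mul]

lemma reindex_sum {X : Type*} {d : ℕ} (p q : Fin d → X) (hp : Function.Injective p)
    (hpq : Set.range p = Set.range q) (g : X → ℝ) :
    ∑ i, g (p i) = ∑ i, g (q i) := by
  classical
  have himg : Finset.image q Finset.univ = Finset.image p Finset.univ := by
    apply Finset.coe_injective
    rw [Finset.coe_image, Finset.coe_image, Finset.coe_univ, Set.image_univ, Set.image_univ, hpq]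
  have hcard : (Finset.image q Finset.univ).card = (Finset.univ : Finset (Fin d)).card := by
    rw [himg]; exact Finset.card_image_of_injective Finset.univ hp
  have hq : Set.InjOn q ↑(Finset.univ : Finset (Fin d)) := Finset.card_image_iff.mp hcard
  rw [← Finset.sum_image (fun i hi j hj hij => hp hij),
    ← Finset.sum_image (fun i hi j hj hij => hq hi hj hij), himg]

lemma antisym_sum {d : ℕ} (A : Fin d → Fin d → ℝ) (h : ∀ i j, A i j = - A j i) :
    ∑ j, ∑ i, A i j = 0 := by
  have h2 : ∑ j, ∑ i, A i j = ∑ i, ∑ j, A i j := Finset.sum_comm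
  have h3 : ∑ i, ∑ j, A i j = - ∑ j, ∑ i, A i j := by
    rw [← Finset.sum_neg_distrib]
    apply Finset.sum_congr rfl
    intro i _
    rw [← Finset.sum_neg_distrib]
    exact Finset.sum_congr rfl (fun j _ => h i j)
  linarith

set_option maxHeartbeats 1000000

/-- Example 2.11: if the underlying unweighted graph of `L` is `d`-regular and
(R)-Ricci-flat, then `F(r) = (d/2) ν_{2,5}(-r/d)` is a CD-function and `L`
satisfies `CD_Υ(2,F)`. -/
theorem stmt_14 {X : Type*} [Countable X] (k : X → X → ℝ) (d : ℕ) (hd : 1 ≤ d)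
    (h01 : ∀ x y : X, x ≠ y → k x y = 0 ∨ k x y = 1)
    (hdiag : ∀ x : X, k x x = -(d : ℝ))
    (hsum : ∀ x : X, Summable fun y : {y : X // y ≠ x} => k x y)
    (hreg : ∀ x : X, M1fn k x = (d : ℝ))
    (hRicci : ∀ x : X, ∃ η : Fin d → X → X,
      (∀ u : X, (u = x ∨ (u ≠ x ∧ k x u = 1)) →
        ∀ i : Fin d, η i u ≠ u ∧ k u (η i u) = 1) ∧
      (∀ u : X, (u = x ∨ (u ≠ x ∧ k x u = 1)) →
        ∀ i j : Fin d, i ≠ j → η i u ≠ η j u) ∧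
      (∀ i : Fin d,
        Set.range (fun j : Fin d => η j (η i x)) =
          Set.range (fun j : Fin d => η i (η j x))) ∧
      (∀ i : Fin d, η i (η i x) = x)) :
    IsCDFunction (fun r => (d : ℝ) / 2 * nuFn 2 5 (-(r / d)))
    ∧ CDUps k 2 (fun r => (d : ℝ) / 2 * nuFn 2 5 (-(r / d))) := by
  constructor
  · exact cd_fun_part hd
  · intro x f _hf
    classical
    obtain ⟨η, hp1, hp2, hp3, hp4⟩ := hRicci x
    set n : Fin d → X := fun i => η i x with hn
    have hxball : (x = x ∨ (x ≠ x ∧ k x x = 1)) := Or.inl rfl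
    have hn1 : ∀ i, n i ≠ x ∧ k x (n i) = 1 := fun i => hp1 x hxball i
    have hn2 : Function.Injective n := by
      intro i j hij
      by_contra hne
      exact hp2 x hxball i j hne hij
    have hnball : ∀ j, (n j = x ∨ (n j ≠ x ∧ k x (n j) = 1)) := fun j => Or.inr (hn1 j)
    have hη1 : ∀ j i, η i (n j) ≠ n j ∧ k (n j) (η i (n j)) = 1 :=
      fun j i => hp1 (n j) (hnball j) i
    have hη2 : ∀ j, Function.Injective (fun i => η i (n j)) := by
      intro j i i' hii
      by_contra hne
      exact hp2 (n j) (hnball j) i i' hne hii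
    set a : Fin d → ℝ := fun i => f (n i) - f x with ha
    set w : Fin d → Fin d → ℝ := fun i j => f (η i (n j)) - f x with hw
    -- reduction of all tsums to finite sums
    have hgen : genOp k f x = ∑ i, a i :=
      key_sum k d h01 hsum hreg x n hn1 hn2 (fun y => f y - f x) (by simp)
    have hpsi : psiUps k f x = ∑ i, Ups (a i) :=
      key_sum k d h01 hsum hreg x n hn1 hn2 (fun y => Ups (f y - f x)) (by simp [Ups])
    have hgenn : ∀ j, genOp k f (n j) = ∑ i, (w i j - a j) := by
      intro j
      have h0 : genOp k f (n j) = ∑ i, (f (η i (n j)) - f (n j)) :=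
        key_sum k d h01 hsum hreg (n j) (fun i => η i (n j)) (hη1 j) (hη2 j)
          (fun y => f y - f (n j)) (by simp)
      rw [h0]
      exact Finset.sum_congr rfl (fun i _ => by simp only [hw, ha]; try ring)
    have hpsin : ∀ j, psiUps k f (n j) = ∑ i, Ups (w i j - a j) := by
      intro j
      have h0 : psiUps k f (n j) = ∑ i, Ups (f (η i (n j)) - f (n j)) :=
        key_sum k d h01 hsum hreg (n j) (fun i => η i (n j)) (hη1 j) (hη2 j)
          (fun y => Ups (f y - f (n j))) (by simp [Ups])
      rw [h0]
      exact Finset.sum_congr rfl (fun i _ => by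
        congr 1
        simp only [hw, ha]; try ring)
    have hgenpsi : genOp k (psiUps k f) x = ∑ j, (psiUps k f (n j) - psiUps k f x) :=
      key_sum k d h01 hsum hreg x n hn1 hn2
        (fun y => psiUps k f y - psiUps k f x) (by simp)
    have hb : bUps k f (genOp k f) x
        = ∑ j, (Real.exp (a j) - 1) * (genOp k f (n j) - genOp k f x) := by
      have h0 : bUps k f (genOp k f) x = ∑' y, k x y *
          ((Real.exp (f y - f x) - 1) * (genOp k f y - genOp k f x)) := by
        unfold bUps
        exact tsum_congr (fun y => by ring)
      rw [h0]
      exact key_sum k d h01 hsum hreg x n hn1 hn2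
        (fun y => (Real.exp (f y - f x) - 1) * (genOp k f y - genOp k f x)) (by simp)
    have hrowcol : ∀ j, ∑ i, w i j = ∑ i, w j i := by
      intro j
      have := reindex_sum (fun i => η i (n j)) (fun i => η j (n i)) (hη2 j)
        (hp3 j) (fun y => f y - f x)
      simpa [hw] using this
    have hwdiag : ∀ i, w i i = 0 := by
      intro i
      simp only [hw, hn, hp4 i, sub_self]
    -- the double sum T
    set T : Fin d → Fin d → ℝ := fun i j =>
      Ups (w i j - a j) - Ups (a i) - (Real.exp (a j) - 1) * (w i j - a j - a i) with hT
    have hsum2 : genOp k (psiUps k f) x - bUps k f (genOp k f) x = ∑ j, ∑ i, T i j := by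
      rw [hgenpsi, hb, ← Finset.sum_sub_distrib]
      apply Finset.sum_congr rfl
      intro j _
      rw [hpsin j, hpsi, hgenn j, hgen, ← Finset.sum_sub_distrib, ← Finset.sum_sub_distrib,
        Finset.mul_sum, ← Finset.sum_sub_distrib]
    set E : Fin d → Fin d → ℝ := fun i j =>
      (Real.exp (a i) - Real.exp (a j)) * (w i j - a j - a i) with hE
    have hTE : ∀ i j, 0 ≤ T i j - E i j := by
      intro i j
      have := ups_tangent (w i j - a j) (a i)
      simp only [hT, hE]
      nlinarith [this]
    have hdiagTE : ∀ i, T i i - E i i = nuFn 2 1 (a i) := by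
      intro i
      simp only [hT, hE, hwdiag i]
      unfold nuFn
      ring_nf
    have hEzero : ∑ j, ∑ i, E i j = 0 := by
      have hsplit : ∀ i j, E i j = (Real.exp (a i) - Real.exp (a j)) * w i j
          + (-((Real.exp (a i) - Real.exp (a j)) * (a j + a i))) := by
        intro i j; simp only [hE]; ring
      have hB : ∑ j, ∑ i, (-((Real.exp (a i) - Real.exp (a j)) * (a j + a i))) = 0 := by
        apply antisym_sum
        intro i j; ring
      have hW : ∑ j, ∑ i, (Real.exp (a i) - Real.exp (a j)) * w i j = 0 := by
        have h1 : ∑ j, ∑ i, (Real.exp (a i) - Real.exp (a j)) * w i j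
            = ∑ j, ∑ i, Real.exp (a i) * w i j - ∑ j, Real.exp (a j) * ∑ i, w i j := by
          rw [← Finset.sum_sub_distrib]
          apply Finset.sum_congr rfl
          intro j _
          rw [Finset.mul_sum, ← Finset.sum_sub_distrib]
          exact Finset.sum_congr rfl (fun i _ => by ring)
        have h2 : ∑ j, Real.exp (a j) * ∑ i, w i j = ∑ j, Real.exp (a j) * ∑ i, w j i :=
          Finset.sum_congr rfl (fun j _ => by rw [hrowcol j])
        have h3 : ∑ j, ∑ i, Real.exp (a i) * w i j = ∑ i, Real.exp (a i) * ∑ j, w i j := by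
          rw [Finset.sum_comm]
          exact Finset.sum_congr rfl (fun i _ => by rw [Finset.mul_sum])
        rw [h1, h2, h3]
        simp [Finset.mul_sum]
      calc ∑ j, ∑ i, E i j
          = ∑ j, ∑ i, ((Real.exp (a i) - Real.exp (a j)) * w i j
            + (-((Real.exp (a i) - Real.exp (a j)) * (a j + a i)))) := by
            exact Finset.sum_congr rfl (fun j _ => Finset.sum_congr rfl
              (fun i _ => hsplit i j))
        _ = (∑ j, ∑ i, (Real.exp (a i) - Real.exp (a j)) * w i j)
            + ∑ j, ∑ i, (-((Real.exp (a i) - Real.exp (a j)) * (a j + a i))) := by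
            rw [← Finset.sum_add_distrib]
            exact Finset.sum_congr rfl (fun j _ => Finset.sum_add_distrib)
        _ = 0 := by rw [hW, hB]; ring
    have hlow : ∑ i, nuFn 2 1 (a i) ≤ ∑ j, ∑ i, T i j := by
      have h1 : ∑ j, ∑ i, T i j = ∑ j, ∑ i, (T i j - E i j) := by
        have := hEzero
        rw [show ∑ j, ∑ i, (T i j - E i j)
            = ∑ j, ∑ i, T i j - ∑ j, ∑ i, E i j by
          rw [← Finset.sum_sub_distrib]
          exact Finset.sum_congr rfl (fun j _ => Finset.sum_sub_distrib _ _)]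
        rw [this]; ring
      rw [h1]
      have h2 : ∀ j, T j j - E j j ≤ ∑ i, (T i j - E i j) := by
        intro j
        exact Finset.single_le_sum (fun i _ => hTE i j) (Finset.mem_univ j)
      calc ∑ i, nuFn 2 1 (a i) = ∑ j, (T j j - E j j) := by
            exact Finset.sum_congr rfl (fun j _ => (hdiagTE j).symm)
        _ ≤ ∑ j, ∑ i, (T i j - E i j) := Finset.sum_le_sum (fun j _ => h2 j)
    -- combine
    have hnu21 : ∀ r : ℝ, nuFn 2 1 r = nuFn 2 5 r + 4 * Ups r := by
      intro r; unfold nuFn; ring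
    have harg : -(-(∑ i, a i)/(d:ℝ)) = (∑ i, a i)/(d:ℝ) := by ring
    have hjensen := nu_jensen hd a
    rw [← harg] at hjensen
    have htriv : trivExt (fun r => (d : ℝ) / 2 * nuFn 2 5 (-(r / d)))
        (-genOp k f x) ≤ (d : ℝ) / 2 * nuFn 2 5 (-(-(∑ i, a i) / (d:ℝ))) := by
      rw [hgen]
      unfold trivExt
      split_ifs with hsgn
      · exact le_refl _
      · exact mul_nonneg (by positivity) (nu_nonneg _)
    have hfinal : ∑ i, nuFn 2 1 (a i)
        ≥ 4 * psiUps k f x + 2 * trivExt (fun r => (d : ℝ) / 2 * nuFn 2 5 (-(r / d)))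
          (-genOp k f x) := by
      have hsum21 : ∑ i, nuFn 2 1 (a i) = ∑ i, nuFn 2 5 (a i) + 4 * ∑ i, Ups (a i) := by
        rw [Finset.mul_sum, ← Finset.sum_add_distrib]
        exact Finset.sum_congr rfl (fun i _ => by rw [hnu21])
      rw [hsum21, hpsi]
      linarith [hjensen, htriv]
    show 2 * psiUps k f x + trivExt _ (-genOp k f x) ≤ psi2Ups k f x
    unfold psi2Ups
    rw [hsum2]
    linarith [hlow, hfinal]
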